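/- Let G be an ℓ×ℓ integer matrix with all row sums and column sums equal to zero, and let G₁ be the (ℓ-1)×(ℓ-1) matrix obtained from G by deleting the last row and last column. If the Smith normal form of G over ℤ is diag(1,…,1,d₁,…,d_r,0) with d_i ≥ 0 and d_{i-1} ∣ d_i, then the Smith normal form of G₁ is diag(1,…,1,d₁,…,d_r). -/

import Mathlib

open Matrix in
theorem comp_aux (m : ℕ) (x : Fin (m+1) → ℤ) :
    ∃ (S : Matrix (Fin (m+1)) (Fin (m+1)) ℤ) (g : ℤ), IsUnit S.det ∧ (∀ i, g ∣ x i) ∧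
      x ᵥ* S = Pi.single (Fin.last m) g := by
  induction m with
  | zero =>
      have h0 : ∀ i : Fin (0+1), i = 0 := fun i => by omega
      refine ⟨1, x 0, by simp, fun i => by rw [h0 i], ?_⟩
      funext j
      rw [h0 j]
      have : Fin.last 0 = 0 := rfl
      rw [this, Pi.single_eq_same]
      simp [Matrix.vecMul_one]
  | succ m ih =>
      obtain ⟨S', g', hS', hdvd', hx'⟩ := ih (fun i => x i.castSucc)
      set a := x (Fin.last (m+1)) with ha
      set e₁ : Fin (m+1) ⊕ Fin 1 ≃ Fin (m+2) := finSumFinEquiv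
      set S₁ : Matrix (Fin (m+2)) (Fin (m+2)) ℤ :=
        (Matrix.fromBlocks S' 0 0 1).submatrix e₁.symm e₁.symm with hS₁def
      have he₁l : ∀ i : Fin (m+1), e₁ (Sum.inl i) = i.castSucc := by
        intro i; apply Fin.ext; simp [e₁]
      have he₁r : e₁ (Sum.inr 0) = Fin.last (m+1) := by
        apply Fin.ext; simp [e₁, Fin.last]
      have hcomp : x ∘ e₁ = Sum.elim (fun i => x i.castSucc) (fun _ => a) := by
        funext p
        rcases p with i | i
        · simp [he₁l]
        · have : i = 0 := by omega
          subst this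
          simp [he₁r, ha]
      have hz : ∀ j, (x ᵥ* S₁) j
          = Sum.elim (Pi.single (Fin.last m) g') (fun _ => a) (e₁.symm j) := by
        intro j
        rw [hS₁def, Matrix.submatrix_vecMul_equiv]
        simp only [Equiv.symm_symm, hcomp, Function.comp_apply, Matrix.vecMul_fromBlocks]
        rcases h : e₁.symm j with i | i
        · simp [hx', h]
        · simp [Matrix.vecMul_one, h]
      set e₂ : Fin m ⊕ Fin 2 ≃ Fin (m+2) := finSumFinEquiv
      set g : ℤ := ↑(Int.gcd g' a) with hg_def
      have hgg' : g ∣ g' := Int.gcd_dvd_left g' a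
      have hga : g ∣ a := Int.gcd_dvd_right g' a
      have hbez : g = g' * Int.gcdA g' a + a * Int.gcdB g' a := Int.gcd_eq_gcd_ab g' a
      have he₂r0 : e₂ (Sum.inr 0) = (Fin.last m).castSucc := by
        apply Fin.ext; simp [e₂]
      have he₂r1 : e₂ (Sum.inr 1) = Fin.last (m+1) := by
        apply Fin.ext
        simp only [e₂, finSumFinEquiv_apply_right, Fin.coe_natAdd, Fin.val_last, Fin.val_one]
      have hze₂ : (x ᵥ* S₁) ∘ e₂ = Sum.elim (fun _ => (0:ℤ)) ![g', a] := by
        funext p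
        rcases p with i | i
        · have : e₁.symm (e₂ (Sum.inl i)) = Sum.inl (i.castSucc) := by
            rw [Equiv.symm_apply_eq]
            apply Fin.ext; simp [e₁, e₂]
          simp only [Function.comp_apply, hz, this, Sum.elim_inl]
          exact Pi.single_eq_of_ne (by simp [Fin.ext_iff, Fin.last]; omega) _
        · have hi : i = 0 ∨ i = 1 := by omega
          rcases hi with hi | hi <;> subst hi
          · have h1 : e₁.symm (e₂ (Sum.inr 0)) = Sum.inl (Fin.last m) := by
              rw [Equiv.symm_apply_eq]
              apply Fin.ext; simp [e₁, e₂]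
            rw [Function.comp_apply, hz, h1]
            simp
          · have h1 : e₁.symm (e₂ (Sum.inr 1)) = Sum.inr 0 := by
              rw [Equiv.symm_apply_eq]
              apply Fin.ext
              simp only [e₁, e₂, finSumFinEquiv_apply_right, Fin.coe_natAdd, Fin.val_one,
                Fin.val_last]
              rfl
            rw [Function.comp_apply, hz, h1]
            simp
      by_cases hg0 : g = 0
      · -- then g' = 0 and a = 0, and z is already the single vector with value 0
        have hga0 : g' = 0 ∧ a = 0 := by
          rw [hg_def] at hg0
          exact Int.gcd_eq_zero_iff.1 (by exact_mod_cast hg0)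
        refine ⟨S₁, 0, ?_, ?_, ?_⟩
        · rw [hS₁def, Matrix.det_submatrix_equiv_self, Matrix.det_fromBlocks_zero₂₁]
          simpa using hS'
        · intro i
          refine Fin.lastCases ?_ (fun i' => ?_) i
          · rw [← ha, hga0.2]
          · have := hdvd' i'
            rwa [hga0.1] at this
        · funext j
          rw [hz j]
          rcases h : e₁.symm j with i | i
          · simp [hga0.1, Pi.single_zero]
          · have hj : j = Fin.last (m+1) := by
              have : i = 0 := by omega
              subst this
              rw [← he₁r, ← h, Equiv.apply_symm_apply]
            simp [hj, hga0.2]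
      · obtain ⟨u, hu⟩ := hgg'
        obtain ⟨v, hv⟩ := hga
        have huv : u * Int.gcdA g' a + v * Int.gcdB g' a = 1 := by
          have : g * (u * Int.gcdA g' a + v * Int.gcdB g' a) = g * 1 := by
            rw [mul_one]
            calc g * (u * Int.gcdA g' a + v * Int.gcdB g' a)
                = (g * u) * Int.gcdA g' a + (g * v) * Int.gcdB g' a := by ring
              _ = g := by rw [← hu, ← hv, ← hbez]
          exact mul_left_cancel₀ hg0 this
        set T₂ : Matrix (Fin 2) (Fin 2) ℤ := !![-v, Int.gcdA g' a; u, Int.gcdB g' a] with hT₂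
        have hdetT₂ : T₂.det = -1 := by
          rw [hT₂, Matrix.det_fin_two_of]
          linear_combination -huv
        set T : Matrix (Fin (m+2)) (Fin (m+2)) ℤ :=
          (Matrix.fromBlocks 1 0 0 T₂).submatrix e₂.symm e₂.symm with hTdef
        have hwT : ![g', a] ᵥ* T₂ = ![0, g] := by
          funext j
          rw [hT₂]
          fin_cases j
          · simp only [Matrix.vecMul, dotProduct, Fin.sum_univ_two]
            show g' * (-v) + a * u = 0
            linear_combination (-v) * hu + u * hv
          · simp only [Matrix.vecMul, dotProduct, Fin.sum_univ_two]
            show g' * Int.gcdA g' a + a * Int.gcdB g' a = g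
            linear_combination -hbez
        have hdT : T.det = -1 := by
          rw [hTdef, Matrix.det_submatrix_equiv_self, Matrix.det_fromBlocks_zero₂₁,
            Matrix.det_one, one_mul, hdetT₂]
        have hdS₁ : S₁.det = S'.det := by
          rw [hS₁def, Matrix.det_submatrix_equiv_self, Matrix.det_fromBlocks_zero₂₁,
            Matrix.det_one, mul_one]
        refine ⟨S₁ * T, g, ?_, ?_, ?_⟩
        · rw [Matrix.det_mul, hdS₁, hdT]
          exact hS'.mul (by simp)
        · intro i
          refine i.lastCases ?_ ?_
          · rw [← ha]; exact ⟨v, hv⟩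
          · intro i'
            exact dvd_trans ⟨u, hu⟩ (hdvd' i')
        · rw [← Matrix.vecMul_vecMul, hTdef, Matrix.submatrix_vecMul_equiv]
          simp only [Equiv.symm_symm, hze₂, Matrix.vecMul_fromBlocks,
            Sum.elim_comp_inl, Sum.elim_comp_inr]
          have hcalc : Sum.elim ((fun _ => (0:ℤ)) ᵥ* (1 : Matrix (Fin m) (Fin m) ℤ)
                + ![g', a] ᵥ* (0 : Matrix (Fin 2) (Fin m) ℤ))
              ((fun _ => (0:ℤ)) ᵥ* (0 : Matrix (Fin m) (Fin 2) ℤ) + ![g', a] ᵥ* T₂)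
              = Sum.elim (fun _ => (0:ℤ)) ![0, g] := by
            rw [hwT]; funext p; rcases p with p | p <;> simp
          rw [hcalc]
          funext j
          rcases h : e₂.symm j with i | i
          · have hj : j ≠ Fin.last (m+1) := by
              intro hj
              rw [hj, ← he₂r1, Equiv.symm_apply_apply] at h
              cases h
            simp [h, Pi.single_eq_of_ne hj]
          · have hi : i = 0 ∨ i = 1 := by omega
            rcases hi with hi | hi <;> subst hi
            · have hj : j = (Fin.last m).castSucc := by
                rw [← he₂r0, ← h, Equiv.apply_symm_apply]
              have hj' : j ≠ Fin.last (m+1) := by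
                rw [hj]
                simp only [ne_eq, Fin.ext_iff, Fin.coe_castSucc, Fin.val_last]
                omega
              simp [h, Pi.single_eq_of_ne hj']
            · have hj : j = Fin.last (m+1) := by
                rw [← he₂r1, ← h, Equiv.apply_symm_apply]
              rw [hj] at h ⊢
              simp only [Function.comp_apply]
              rw [h]
              simp

open Matrix in
theorem comp_one (m : ℕ) (x c : Fin (m+1) → ℤ) (h : ∑ i, x i * c i = 1) :
    ∃ S : Matrix (Fin (m+1)) (Fin (m+1)) ℤ, IsUnit S.det ∧
      x ᵥ* S = Pi.single (Fin.last m) 1 := by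
  obtain ⟨S, g, hS, hdvd, hxS⟩ := comp_aux m x
  have hg1 : g ∣ 1 := by
    rw [← h]
    exact Finset.dvd_sum fun i _ => Dvd.dvd.mul_right (hdvd i) _
  have hgu : IsUnit g := isUnit_of_dvd_one hg1
  have hgg : g * g = 1 := by
    rcases Int.isUnit_iff.1 hgu with h' | h' <;> rw [h'] <;> ring
  refine ⟨S * Matrix.diagonal (fun j => if j = Fin.last m then g else 1), ?_, ?_⟩
  · rw [Matrix.det_mul, Matrix.det_diagonal]
    refine hS.mul ?_
    have : ∏ j : Fin (m+1), (if j = Fin.last m then g else 1) = g := by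
      simp [Finset.prod_ite_eq']
    rw [this]; exact hgu
  · rw [← Matrix.vecMul_vecMul, hxS]
    funext j
    rw [Matrix.vecMul_diagonal]
    by_cases hj : j = Fin.last m
    · subst hj; simp [hgg]
    · simp [Pi.single_eq_of_ne hj]

section Main
open Matrix

/-- Let `G` be an `(l+1) × (l+1)` integer matrix with all row and column sums zero, and
let `G₁` be obtained from `G` by deleting the last row and column.  If the Smith normal
form of `G` over `ℤ` is `diag(d 0, d 1, …, d (l-1), 0)` (with nonnegative entries, each
dividing the next, the last entry being `0`), then the Smith normal form of `G₁` is
`diag(d 0, …, d (l-1))`. -/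
theorem snf_of_deleted_row_col
    (l : ℕ) (G : Matrix (Fin (l + 1)) (Fin (l + 1)) ℤ)
    (hrow : ∀ i, ∑ k, G i k = 0) (hcol : ∀ i, ∑ k, G k i = 0)
    (U V : Matrix (Fin (l + 1)) (Fin (l + 1)) ℤ) (d : Fin (l + 1) → ℤ)
    (hU : IsUnit U.det) (hV : IsUnit V.det)
    (hdiag : U * G * V = Matrix.diagonal d)
    (hnonneg : ∀ i, 0 ≤ d i)
    (hchain : ∀ i : Fin l, d i.castSucc ∣ d i.succ)
    (hlast : d (Fin.last l) = 0) :
    ∃ U' V' : Matrix (Fin l) (Fin l) ℤ,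
      IsUnit U'.det ∧ IsUnit V'.det ∧
      U' * G.submatrix Fin.castSucc Fin.castSucc * V' =
        Matrix.diagonal (fun i => d i.castSucc) := by
  classical
  set B : Matrix (Fin (l+1)) (Fin (l+1)) ℤ :=
    Matrix.of (fun i j => if i = Fin.last l ∨ j = Fin.last l then 0 else G i j) with hB_def
  set M : Matrix (Fin (l+1)) (Fin (l+1)) ℤ :=
    Matrix.of (fun i j => if i = Fin.last l then (if j = Fin.last l then 1 else -1)
      else if i = j then 1 else 0) with hM_def
  have hB1 : ∀ j, B (Fin.last l) j = 0 := by intro j; simp [hB_def]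
  have hB2 : ∀ i, B i (Fin.last l) = 0 := by intro i; simp [hB_def]
  have hB3 : ∀ (i j : Fin (l+1)), i ≠ Fin.last l → j ≠ Fin.last l → B i j = G i j := by
    intro i j hi hj; simp [hB_def, hi, hj]
  have hrow' : ∀ i, G i (Fin.last l) = - ∑ t : Fin l, G i t.castSucc := by
    intro i; have := hrow i; rw [Fin.sum_univ_castSucc] at this; linarith
  have hcol' : ∀ j, G (Fin.last l) j = - ∑ t : Fin l, G t.castSucc j := by
    intro j; have := hcol j; rw [Fin.sum_univ_castSucc] at this; linarith
  have hm1 : ∀ t : Fin l, M (Fin.last l) t.castSucc = -1 := by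
    intro t; simp [hM_def, (Fin.castSucc_lt_last t).ne]
  have hm2 : M (Fin.last l) (Fin.last l) = 1 := by simp [hM_def]
  have hm3 : ∀ (i k : Fin (l+1)), i ≠ Fin.last l → M i k = if i = k then 1 else 0 := by
    intro i k hi; simp [hM_def, hi]
  have hMdet : M.det = 1 := by
    have htri : M.BlockTriangular OrderDual.toDual := by
      intro i j hij
      have hij' : i < j := hij
      have hi : i ≠ Fin.last l := by
        intro h
        exact absurd (h ▸ hij' : Fin.last l < j) (not_lt.2 (Fin.le_last j))
      simp [hM_def, hi, hij'.ne]
    rw [Matrix.det_of_lowerTriangular M htri]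
    apply Finset.prod_eq_one
    intro i _
    by_cases hi : i = Fin.last l <;> simp [hM_def, hi]
  have hNdet : Mᵀ.det = 1 := by rw [Matrix.det_transpose]; exact hMdet
  have hMB : ∀ i k, (M * B) i k =
      if i = Fin.last l then - ∑ t : Fin l, B t.castSucc k else B i k := by
    intro i k
    rw [Matrix.mul_apply]
    by_cases hi : i = Fin.last l
    · subst hi
      rw [if_pos rfl, Fin.sum_univ_castSucc]
      simp only [hm1, hm2, hB1, one_mul, mul_zero, add_zero, neg_mul, neg_one_mul]
      exact Finset.sum_neg_distrib _
    · rw [if_neg hi]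
      rw [Finset.sum_congr rfl (fun t _ => by rw [hm3 i t hi, ite_mul, one_mul, zero_mul])]
      rw [Finset.sum_ite_eq]
      simp
  have hGll : G (Fin.last l) (Fin.last l) = ∑ t : Fin l, ∑ s : Fin l, G s.castSucc t.castSucc := by
    rw [hcol' (Fin.last l)]
    rw [show (∑ s : Fin l, G s.castSucc (Fin.last l))
        = ∑ s : Fin l, -(∑ t : Fin l, G s.castSucc t.castSucc) from
      Finset.sum_congr rfl fun s _ => hrow' s.castSucc]
    rw [Finset.sum_neg_distrib, neg_neg]
    exact Finset.sum_comm
  have hGMBN : M * B * Mᵀ = G := by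
    ext i j
    rw [Matrix.mul_apply]
    by_cases hj : j = Fin.last l
    · subst hj
      rw [Fin.sum_univ_castSucc]
      by_cases hi : i = Fin.last l
      · subst hi
        have h1 : (M * B) (Fin.last l) (Fin.last l) * (Mᵀ : Matrix _ _ ℤ) (Fin.last l) (Fin.last l)
            = 0 := by
          rw [hMB, if_pos rfl]
          rw [show (∑ t : Fin l, B t.castSucc (Fin.last l)) = 0 by
            rw [Finset.sum_congr rfl (fun t _ => hB2 t.castSucc)]; simp]
          simp
        have hterm : ∀ t : Fin l,
            (M * B) (Fin.last l) t.castSucc * (Mᵀ : Matrix _ _ ℤ) t.castSucc (Fin.last l)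
            = ∑ s : Fin l, G s.castSucc t.castSucc := by
          intro t
          rw [Matrix.transpose_apply, hm1 t, hMB, if_pos rfl]
          rw [show (∑ s : Fin l, B s.castSucc t.castSucc) = ∑ s : Fin l, G s.castSucc t.castSucc
            from Finset.sum_congr rfl fun s _ =>
              hB3 _ _ (Fin.castSucc_lt_last s).ne (Fin.castSucc_lt_last t).ne]
          ring
        rw [h1, add_zero, Finset.sum_congr rfl (fun t _ => hterm t)]
        exact hGll.symm
      · have h1 : (M * B) i (Fin.last l) * (Mᵀ : Matrix _ _ ℤ) (Fin.last l) (Fin.last l) = 0 := by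
          rw [hMB, if_neg hi, hB2 i, zero_mul]
        have hterm : ∀ t : Fin l,
            (M * B) i t.castSucc * (Mᵀ : Matrix _ _ ℤ) t.castSucc (Fin.last l)
            = -(G i t.castSucc) := by
          intro t
          rw [Matrix.transpose_apply, hm1 t, hMB, if_neg hi,
            hB3 i t.castSucc hi (Fin.castSucc_lt_last t).ne]
          ring
        rw [h1, add_zero, Finset.sum_congr rfl (fun t _ => hterm t), Finset.sum_neg_distrib]
        exact (hrow' i).symm
    · rw [Finset.sum_congr rfl (fun k (_ : k ∈ Finset.univ) => by
        rw [Matrix.transpose_apply, hm3 j k hj, mul_ite, mul_one, mul_zero])]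
      rw [Finset.sum_ite_eq]
      simp only [Finset.mem_univ, if_pos]
      by_cases hi : i = Fin.last l
      · subst hi
        rw [hMB, if_pos rfl]
        rw [show (∑ t : Fin l, B t.castSucc j) = ∑ t : Fin l, G t.castSucc j from
          Finset.sum_congr rfl fun t _ => hB3 t.castSucc j (Fin.castSucc_lt_last t).ne hj]
        exact (hcol' j).symm
      · rw [hMB, if_neg hi]
        exact hB3 i j hi hj
  -- invertible matrices
  haveI iU : Invertible U := U.invertibleOfIsUnitDet hU
  haveI iV : Invertible V := V.invertibleOfIsUnitDet hV
  haveI iM : Invertible M := M.invertibleOfIsUnitDet (by rw [hMdet]; exact isUnit_one)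
  haveI iN : Invertible Mᵀ := Mᵀ.invertibleOfIsUnitDet (by rw [hNdet]; exact isUnit_one)
  haveI iUM : Invertible (U * M) := invertibleMul U M
  haveI iNV : Invertible (Mᵀ * V) := invertibleMul Mᵀ V
  have key : (U * M) * B * (Mᵀ * V) = Matrix.diagonal d := by
    have h0 : U * (M * B * Mᵀ) * V = Matrix.diagonal d := by rw [hGMBN]; exact hdiag
    calc (U * M) * B * (Mᵀ * V) = U * (M * B * Mᵀ) * V := by simp only [Matrix.mul_assoc]
      _ = Matrix.diagonal d := h0
  set P : Matrix (Fin (l+1)) (Fin (l+1)) ℤ := ⅟(U * M) with hP_def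
  set Q : Matrix (Fin (l+1)) (Fin (l+1)) ℤ := ⅟(Mᵀ * V) with hQ_def
  have hPdet : IsUnit P.det := by
    refine IsUnit.of_mul_eq_one (U * M).det ?_
    rw [← Matrix.det_mul, hP_def, invOf_mul_self, Matrix.det_one]
  have hQdet : IsUnit Q.det := by
    refine IsUnit.of_mul_eq_one (Mᵀ * V).det ?_
    rw [← Matrix.det_mul, hQ_def, invOf_mul_self, Matrix.det_one]
  have hBPQ : B = P * Matrix.diagonal d * Q := by
    calc B = 1 * B * 1 := by rw [Matrix.one_mul, Matrix.mul_one]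
      _ = (P * (U * M)) * B * ((Mᵀ * V) * Q) := by
          rw [hP_def, hQ_def, invOf_mul_self, mul_invOf_self]
      _ = P * ((U * M) * B * (Mᵀ * V)) * Q := by simp only [Matrix.mul_assoc]
      _ = P * Matrix.diagonal d * Q := by rw [key]
  have hPD : P * Matrix.diagonal d = B * (Mᵀ * V) := by
    calc P * Matrix.diagonal d = P * Matrix.diagonal d * (Q * (Mᵀ * V)) := by
          rw [hQ_def, invOf_mul_self, Matrix.mul_one]
      _ = (P * Matrix.diagonal d * Q) * (Mᵀ * V) := by simp only [Matrix.mul_assoc]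
      _ = B * (Mᵀ * V) := by rw [← hBPQ]
  have hDQ : Matrix.diagonal d * Q = (U * M) * B := by
    calc Matrix.diagonal d * Q = ((U * M) * P) * Matrix.diagonal d * Q := by
          rw [mul_invOf_self, Matrix.one_mul]
      _ = (U * M) * (P * Matrix.diagonal d * Q) := by simp only [Matrix.mul_assoc]
      _ = (U * M) * B := by rw [← hBPQ]
  have hx : ∀ k, P (Fin.last l) k * d k = 0 := by
    intro k
    have h1 : (P * Matrix.diagonal d) (Fin.last l) k = P (Fin.last l) k * d k :=
      Matrix.mul_diagonal d P _ k
    have h2 : (B * (Mᵀ * V)) (Fin.last l) k = 0 := by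
      rw [Matrix.mul_apply]
      exact Finset.sum_eq_zero fun j _ => by rw [hB1 j, zero_mul]
    rw [← h1, hPD, h2]
  have hy : ∀ k, d k * Q k (Fin.last l) = 0 := by
    intro k
    have h1 : (Matrix.diagonal d * Q) k (Fin.last l) = d k * Q k (Fin.last l) :=
      Matrix.diagonal_mul d Q k _
    have h2 : ((U * M) * B) k (Fin.last l) = 0 := by
      rw [Matrix.mul_apply]
      exact Finset.sum_eq_zero fun j _ => by rw [hB2 j, mul_zero]
    rw [← h1, hDQ, h2]
  have hbezP : ∑ k, P (Fin.last l) k * (U * M) k (Fin.last l) = 1 := by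
    have : (P * (U * M)) (Fin.last l) (Fin.last l) = 1 := by
      rw [hP_def, invOf_mul_self, Matrix.one_apply_eq]
    rw [← this, Matrix.mul_apply]
  have hbezQ : ∑ k, Q k (Fin.last l) * (Mᵀ * V) (Fin.last l) k = 1 := by
    have : ((Mᵀ * V) * Q) (Fin.last l) (Fin.last l) = 1 := by
      rw [hQ_def, mul_invOf_self, Matrix.one_apply_eq]
    rw [← this, Matrix.mul_apply]
    exact Finset.sum_congr rfl fun k _ => mul_comm _ _
  -- divisibility chain is monotone
  have hmono : ∀ i j : Fin (l+1), i ≤ j → d i ∣ d j := by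
    have H : ∀ (t : ℕ) (i j : Fin (l+1)), (j:ℕ) = (i:ℕ) + t → d i ∣ d j := by
      intro t
      induction t with
      | zero =>
          intro i j h
          have : i = j := Fin.ext (by omega)
          rw [this]
      | succ t ih =>
          intro i j h
          have hj1 : (j:ℕ) - 1 < l + 1 := by omega
          have hj2 : (j:ℕ) - 1 < l := by have := j.isLt; omega
          have h1 : d i ∣ d ⟨(j:ℕ) - 1, hj1⟩ := ih i _ (by simp; omega)
          refine h1.trans ?_
          have h2 := hchain ⟨(j:ℕ) - 1, hj2⟩
          have e1 : (⟨(j:ℕ) - 1, hj2⟩ : Fin l).castSucc = ⟨(j:ℕ) - 1, hj1⟩ := by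
            apply Fin.ext; simp
          have e2 : (⟨(j:ℕ) - 1, hj2⟩ : Fin l).succ = j := by
            apply Fin.ext; simp; omega
          rwa [e1, e2] at h2
    intro i j hij
    exact H ((j:ℕ) - (i:ℕ)) i j (by have := Fin.le_def.1 hij; omega)
  have hex : ∃ n, ∀ k : Fin (l+1), n ≤ (k:ℕ) → d k = 0 := by
    refine ⟨l, fun k hk => ?_⟩
    have : k = Fin.last l := Fin.ext (by have := k.isLt; simp [Fin.val_last]; omega)
    rw [this]; exact hlast
  set r := Nat.find hex with hr_def
  have hzr : ∀ k : Fin (l+1), r ≤ (k:ℕ) → d k = 0 := Nat.find_spec hex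
  have hrle : r ≤ l := Nat.find_le (fun k hk => by
    have : k = Fin.last l := Fin.ext (by have := k.isLt; simp [Fin.val_last]; omega)
    rw [this]; exact hlast)
  have hnz : ∀ k : Fin (l+1), (k:ℕ) < r → d k ≠ 0 := by
    intro k hk hk0
    have hall : ∀ k' : Fin (l+1), (k:ℕ) ≤ (k':ℕ) → d k' = 0 := by
      intro k' h'
      have := hmono k k' (Fin.le_def.2 h')
      rw [hk0] at this
      exact zero_dvd_iff.1 this
    exact absurd (Nat.find_le hall : r ≤ (k:ℕ)) (by omega)
  set m := l - r with hm_def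
  have hrm : r + (m + 1) = l + 1 := by omega
  set e : Fin r ⊕ Fin (m+1) ≃ Fin (l+1) := finSumFinEquiv.trans (finCongr hrm) with he_def
  have heinl : ∀ i : Fin r, (e (Sum.inl i) : ℕ) = (i:ℕ) := by
    intro i; simp [he_def]
  have heinr : ∀ j : Fin (m+1), (e (Sum.inr j) : ℕ) = r + (j:ℕ) := by
    intro j; simp [he_def]
  have helast : e (Sum.inr (Fin.last m)) = Fin.last l := by
    apply Fin.ext
    rw [heinr]
    simp [Fin.val_last]
    omega
  have hdinl : ∀ i : Fin r, d (e (Sum.inl i)) ≠ 0 := fun i => hnz _ (by rw [heinl]; exact i.isLt)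
  -- the P side
  set x : Fin (l+1) → ℤ := fun k => P (Fin.last l) k with hx_def
  have hx0 : ∀ i : Fin r, x (e (Sum.inl i)) = 0 := by
    intro i
    rcases mul_eq_zero.1 (hx (e (Sum.inl i))) with h | h
    · exact h
    · exact absurd h (hdinl i)
  have hx'c' : ∑ j, x (e (Sum.inr j)) * (U * M) (e (Sum.inr j)) (Fin.last l) = 1 := by
    have h1 : ∑ p : Fin r ⊕ Fin (m+1), x (e p) * (U * M) (e p) (Fin.last l)
        = ∑ k, x k * (U * M) k (Fin.last l) :=
      Fintype.sum_equiv e _ _ (fun p => rfl)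
    rw [Fintype.sum_sum_type] at h1
    have h2 : ∀ i : Fin r, x (e (Sum.inl i)) * (U * M) (e (Sum.inl i)) (Fin.last l) = 0 := by
      intro i; rw [hx0 i, zero_mul]
    rw [Finset.sum_congr rfl (fun i _ => h2 i), Finset.sum_const_zero, zero_add] at h1
    rw [h1]
    exact hbezP
  obtain ⟨S, hSdet, hSx⟩ := comp_one m _ _ hx'c'
  set R : Matrix (Fin (l+1)) (Fin (l+1)) ℤ :=
    (Matrix.fromBlocks 1 0 0 S).submatrix e.symm e.symm with hR_def
  have hRdet : IsUnit R.det := by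
    rw [hR_def, Matrix.det_submatrix_equiv_self, Matrix.det_fromBlocks_zero₂₁,
      Matrix.det_one, one_mul]
    exact hSdet
  have hRD : R * Matrix.diagonal d = Matrix.diagonal d := by
    ext i j
    rw [Matrix.mul_diagonal]
    by_cases hj : r ≤ (j:ℕ)
    · rw [hzr j hj, mul_zero, Matrix.diagonal_apply]
      by_cases hij : i = j
      · rw [if_pos hij, hij, hzr j hj]
      · rw [if_neg hij]
    · have hj' : (j:ℕ) < r := by omega
      have hsymmj : e.symm j = Sum.inl ⟨(j:ℕ), hj'⟩ := by
        rw [Equiv.symm_apply_eq]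
        apply Fin.ext
        rw [heinl]
      have hR : R i j = if i = j then 1 else 0 := by
        show (Matrix.fromBlocks 1 0 0 S) (e.symm i) (e.symm j) = _
        rw [hsymmj]
        rcases h2 : e.symm i with i₂ | i₂
        · have hieq : i = e (Sum.inl i₂) := by rw [← h2, Equiv.apply_symm_apply]
          rw [Matrix.fromBlocks_apply₁₁, Matrix.one_apply]
          by_cases h3 : i₂ = ⟨(j:ℕ), hj'⟩
          · rw [if_pos h3, if_pos]
            rw [hieq, h3]
            apply Fin.ext
            rw [heinl]
          · rw [if_neg h3, if_neg]
            intro hij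
            apply h3
            have : e.symm i = e.symm j := by rw [hij]
            rw [h2, hsymmj] at this
            exact Sum.inl_injective this
        · rw [Matrix.fromBlocks_apply₂₁]
          rw [if_neg, Matrix.zero_apply]
          intro hij
          rw [hij, hsymmj] at h2
          cases h2
      rw [hR]
      by_cases hij : i = j
      · rw [if_pos hij, one_mul, hij]
        exact (Matrix.diagonal_apply_eq d j).symm
      · rw [if_neg hij, zero_mul]
        exact (Matrix.diagonal_apply_ne d hij).symm
  have hxR : x ᵥ* R = Pi.single (Fin.last l) 1 := by
    rw [hR_def, Matrix.submatrix_vecMul_equiv]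
    have hcomp : x ∘ e.symm.symm = Sum.elim (fun _ => (0:ℤ)) (fun j => x (e (Sum.inr j))) := by
      funext p
      rcases p with i | i
      · simpa using hx0 i
      · simp
    rw [hcomp, Matrix.vecMul_fromBlocks]
    funext j
    simp only [Function.comp_apply]
    rcases h : e.symm j with i | i
    · have hj : j ≠ Fin.last l := by
        intro hj
        rw [hj, ← helast, Equiv.symm_apply_apply] at h
        cases h
      simp [h, Pi.single_eq_of_ne hj, Matrix.vecMul_one]
    · have hji : j = e (Sum.inr i) := by rw [← h, Equiv.apply_symm_apply]
      simp only [Sum.elim_inr, Sum.elim_comp_inl, Sum.elim_comp_inr, Pi.add_apply,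
        Matrix.vecMul_zero, Pi.zero_apply, zero_add, hSx]
      by_cases hi : i = Fin.last m
      · subst hi
        rw [hji, helast]
        simp
      · have hj : j ≠ Fin.last l := by
          intro hj
          rw [hj, ← helast, Equiv.symm_apply_apply] at h
          exact hi (Sum.inr_injective h).symm
        rw [Pi.single_eq_of_ne hi, Pi.single_eq_of_ne hj]
  -- the Q side
  set y : Fin (l+1) → ℤ := fun k => Q k (Fin.last l) with hy_def
  have hy0 : ∀ i : Fin r, y (e (Sum.inl i)) = 0 := by
    intro i
    rcases mul_eq_zero.1 (hy (e (Sum.inl i))) with h | h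
    · exact absurd h (hdinl i)
    · exact h
  have hy'c' : ∑ j, y (e (Sum.inr j)) * (Mᵀ * V) (Fin.last l) (e (Sum.inr j)) = 1 := by
    have h1 : ∑ p : Fin r ⊕ Fin (m+1), y (e p) * (Mᵀ * V) (Fin.last l) (e p)
        = ∑ k, y k * (Mᵀ * V) (Fin.last l) k :=
      Fintype.sum_equiv e _ _ (fun p => rfl)
    rw [Fintype.sum_sum_type] at h1
    have h2 : ∀ i : Fin r, y (e (Sum.inl i)) * (Mᵀ * V) (Fin.last l) (e (Sum.inl i)) = 0 := by
      intro i; rw [hy0 i, zero_mul]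
    rw [Finset.sum_congr rfl (fun i _ => h2 i), Finset.sum_const_zero, zero_add] at h1
    rw [h1]
    exact hbezQ
  obtain ⟨S₂, hS₂det, hS₂y⟩ := comp_one m _ _ hy'c'
  set R' : Matrix (Fin (l+1)) (Fin (l+1)) ℤ :=
    (Matrix.fromBlocks 1 0 0 S₂ᵀ).submatrix e.symm e.symm with hR'_def
  have hR'det : IsUnit R'.det := by
    rw [hR'_def, Matrix.det_submatrix_equiv_self, Matrix.det_fromBlocks_zero₂₁,
      Matrix.det_one, one_mul, Matrix.det_transpose]
    exact hS₂det
  have hDR' : Matrix.diagonal d * R' = Matrix.diagonal d := by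
    ext i j
    rw [Matrix.diagonal_mul]
    by_cases hi : r ≤ (i:ℕ)
    · rw [hzr i hi, zero_mul, Matrix.diagonal_apply]
      by_cases hij : i = j
      · rw [if_pos hij, hzr i hi]
      · rw [if_neg hij]
    · have hi' : (i:ℕ) < r := by omega
      have hsymmi : e.symm i = Sum.inl ⟨(i:ℕ), hi'⟩ := by
        rw [Equiv.symm_apply_eq]
        apply Fin.ext
        rw [heinl]
      have hR' : R' i j = if i = j then 1 else 0 := by
        show (Matrix.fromBlocks 1 0 0 S₂ᵀ) (e.symm i) (e.symm j) = _
        rw [hsymmi]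
        rcases h2 : e.symm j with j₂ | j₂
        · have hjeq : j = e (Sum.inl j₂) := by rw [← h2, Equiv.apply_symm_apply]
          rw [Matrix.fromBlocks_apply₁₁, Matrix.one_apply]
          by_cases h3 : (⟨(i:ℕ), hi'⟩ : Fin r) = j₂
          · rw [if_pos h3, if_pos]
            rw [hjeq, ← h3]
            apply Fin.ext
            rw [heinl]
          · rw [if_neg h3, if_neg]
            intro hij
            apply h3
            have : e.symm i = e.symm j := by rw [hij]
            rw [hsymmi, h2] at this
            exact Sum.inl_injective this
        · rw [Matrix.fromBlocks_apply₁₂]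
          rw [if_neg, Matrix.zero_apply]
          intro hij
          rw [← hij, hsymmi] at h2
          cases h2
      rw [hR']
      by_cases hij : i = j
      · rw [if_pos hij, mul_one, hij]
        exact (Matrix.diagonal_apply_eq d j).symm
      · rw [if_neg hij, mul_zero]
        exact (Matrix.diagonal_apply_ne d hij).symm
  have hR'y : R' *ᵥ y = Pi.single (Fin.last l) 1 := by
    rw [hR'_def, Matrix.submatrix_mulVec_equiv]
    have hcomp2 : y ∘ e.symm.symm = Sum.elim (fun _ => (0:ℤ)) (fun j => y (e (Sum.inr j))) := by
      funext p
      rcases p with i | i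
      · simpa using hy0 i
      · simp
    rw [hcomp2, Matrix.fromBlocks_mulVec]
    funext j
    simp only [Function.comp_apply]
    rcases h : e.symm j with i | i
    · have hj : j ≠ Fin.last l := by
        intro hj
        rw [hj, ← helast, Equiv.symm_apply_apply] at h
        cases h
      simp [h, Pi.single_eq_of_ne hj, Matrix.mulVec_zero, Matrix.one_mulVec]
    · have hji : j = e (Sum.inr i) := by rw [← h, Equiv.apply_symm_apply]
      simp only [Sum.elim_inr, Sum.elim_comp_inl, Sum.elim_comp_inr, Pi.add_apply,
        Matrix.mulVec_zero, Matrix.zero_mulVec, Pi.zero_apply, zero_add, add_zero,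
        Matrix.mulVec_transpose, hS₂y]
      by_cases hi : i = Fin.last m
      · subst hi
        rw [hji, helast]
        simp
      · have hj : j ≠ Fin.last l := by
          intro hj
          rw [hj, ← helast, Equiv.symm_apply_apply] at h
          exact hi (Sum.inr_injective h).symm
        rw [Pi.single_eq_of_ne hi, Pi.single_eq_of_ne hj]
  -- assemble
  set Pt : Matrix (Fin (l+1)) (Fin (l+1)) ℤ := P * R with hPt_def
  set Qt : Matrix (Fin (l+1)) (Fin (l+1)) ℤ := R' * Q with hQt_def
  have hBt : B = Pt * Matrix.diagonal d * Qt := by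
    calc B = P * Matrix.diagonal d * Q := hBPQ
      _ = P * (R * Matrix.diagonal d) * Q := by rw [hRD]
      _ = P * (R * (Matrix.diagonal d * R')) * Q := by rw [hDR']
      _ = (P * R) * Matrix.diagonal d * (R' * Q) := by simp only [Matrix.mul_assoc]
  have hPtlast : ∀ j, Pt (Fin.last l) j = (Pi.single (Fin.last l) 1 : Fin (l+1) → ℤ) j := by
    intro j
    calc Pt (Fin.last l) j = (x ᵥ* R) j := rfl
      _ = (Pi.single (Fin.last l) 1 : Fin (l+1) → ℤ) j := congrFun hxR j
  have hQtlast : ∀ i, Qt i (Fin.last l) = (Pi.single (Fin.last l) 1 : Fin (l+1) → ℤ) i := by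
    intro i
    calc Qt i (Fin.last l) = (R' *ᵥ y) i := rfl
      _ = (Pi.single (Fin.last l) 1 : Fin (l+1) → ℤ) i := congrFun hR'y i
  have hPtdet : IsUnit Pt.det := by rw [hPt_def, Matrix.det_mul]; exact hPdet.mul hRdet
  have hQtdet : IsUnit Qt.det := by rw [hQt_def, Matrix.det_mul]; exact hR'det.mul hQdet
  have hpow : ((-1:ℤ))^((Fin.last l : ℕ) + (Fin.last l : ℕ)) = 1 :=
    Even.neg_one_pow ⟨(Fin.last l : ℕ), rfl⟩
  set P₁ : Matrix (Fin l) (Fin l) ℤ := Pt.submatrix Fin.castSucc Fin.castSucc with hP₁_def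
  set Q₁ : Matrix (Fin l) (Fin l) ℤ := Qt.submatrix Fin.castSucc Fin.castSucc with hQ₁_def
  have hP₁det : IsUnit P₁.det := by
    have hexp := Matrix.det_succ_row Pt (Fin.last l)
    rw [Finset.sum_eq_single (Fin.last l)
        (fun j _ hjne => by rw [hPtlast j, Pi.single_eq_of_ne hjne]; ring)
        (fun habs => absurd (Finset.mem_univ _) habs)] at hexp
    rw [hPtlast, Pi.single_eq_same, hpow, one_mul, one_mul, Fin.succAbove_last] at hexp
    rw [← hexp]
    exact hPtdet
  have hQ₁det : IsUnit Q₁.det := by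
    have hexp := Matrix.det_succ_column Qt (Fin.last l)
    rw [Finset.sum_eq_single (Fin.last l)
        (fun i _ hine => by rw [hQtlast i, Pi.single_eq_of_ne hine]; ring)
        (fun habs => absurd (Finset.mem_univ _) habs)] at hexp
    rw [hQtlast, Pi.single_eq_same, hpow, one_mul, one_mul, Fin.succAbove_last] at hexp
    rw [← hexp]
    exact hQtdet
  have hD₁ : P₁ * Matrix.diagonal (fun i : Fin l => d i.castSucc) * Q₁
      = G.submatrix Fin.castSucc Fin.castSucc := by
    ext i j
    have hL : (P₁ * Matrix.diagonal (fun i : Fin l => d i.castSucc) * Q₁) i j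
        = ∑ k : Fin l, Pt i.castSucc k.castSucc * d k.castSucc * Qt k.castSucc j.castSucc := by
      rw [Matrix.mul_apply]
      refine Finset.sum_congr rfl fun k _ => ?_
      rw [Matrix.mul_diagonal]
      rfl
    have hRt : (Pt * Matrix.diagonal d * Qt) i.castSucc j.castSucc
        = ∑ k : Fin l, Pt i.castSucc k.castSucc * d k.castSucc * Qt k.castSucc j.castSucc := by
      rw [Matrix.mul_apply, Fin.sum_univ_castSucc]
      rw [show (Pt * Matrix.diagonal d) i.castSucc (Fin.last l) * Qt (Fin.last l) j.castSucc
          = 0 by rw [Matrix.mul_diagonal, hlast, mul_zero, zero_mul]]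
      rw [add_zero]
      refine Finset.sum_congr rfl fun k _ => ?_
      rw [Matrix.mul_diagonal]
    rw [hL, ← hRt, ← hBt]
    exact hB3 _ _ (Fin.castSucc_lt_last i).ne (Fin.castSucc_lt_last j).ne
  haveI iP₁ : Invertible P₁ := P₁.invertibleOfIsUnitDet hP₁det
  haveI iQ₁ : Invertible Q₁ := Q₁.invertibleOfIsUnitDet hQ₁det
  refine ⟨⅟P₁, ⅟Q₁, ?_, ?_, ?_⟩
  · exact IsUnit.of_mul_eq_one P₁.det
      (by rw [← Matrix.det_mul, invOf_mul_self, Matrix.det_one])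
  · exact IsUnit.of_mul_eq_one Q₁.det
      (by rw [← Matrix.det_mul, invOf_mul_self, Matrix.det_one])
  · calc ⅟P₁ * G.submatrix Fin.castSucc Fin.castSucc * ⅟Q₁
        = ⅟P₁ * (P₁ * Matrix.diagonal (fun i : Fin l => d i.castSucc) * Q₁) * ⅟Q₁ := by
          rw [hD₁]
      _ = (⅟P₁ * P₁) * Matrix.diagonal (fun i : Fin l => d i.castSucc) * (Q₁ * ⅟Q₁) := by
          simp only [Matrix.mul_assoc]
      _ = Matrix.diagonal (fun i : Fin l => d i.castSucc) := by
          rw [invOf_mul_self, mul_invOf_self, Matrix.one_mul, Matrix.mul_one]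

end Main
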